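/- Let X be a metric space, let ε > 0 and δ > 0, and suppose there exists an integer p such that every closed ball of radius δ + ε in X can be covered by p closed balls of radius ε. Then for every subset A ⊆ X with finite ε-volume, the closed δ-neighborhood N_δ(A) = {x ∈ X : d(x, A) ≤ δ} satisfies Vol_X^ε(N_δ(A)) ≤ p · Vol_X^ε(A). -/

import Mathlib

/-- `A` can be covered by `n` closed balls of radius `ε`. -/
def CoveredBy {X : Type*} [MetricSpace X] (A : Set X) (ε : ℝ) (n : ℕ) : Prop :=
  ∃ c : Fin n → X, A ⊆ ⋃ i, Metric.closedBall (c i) ε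

/-- The `ε`-volume of a set: the minimal number of closed `ε`-balls needed to cover it. -/
noncomputable def eVol {X : Type*} [MetricSpace X] (ε : ℝ) (A : Set X) : ℕ :=
  sInf {n : ℕ | CoveredBy A ε n}

/-- The `ε`-volume of the closed `δ`-neighborhood of a set is controlled by the
`ε`-volume of the set, provided every ball of radius `δ + ε` is covered by `p`
balls of radius `ε`. -/
theorem eVol_cthickening_le {X : Type*} [MetricSpace X] (ε δ : ℝ) (hε : 0 < ε) (hδ : 0 < δ)
    (p : ℕ) (hp : ∀ x : X, CoveredBy (Metric.closedBall x (δ + ε)) ε p)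
    (A : Set X) (hA : {n : ℕ | CoveredBy A ε n}.Nonempty) :
    eVol ε (Metric.cthickening δ A) ≤ p * eVol ε A := by
  set n := eVol ε A with hn
  have hmem : CoveredBy A ε n := Nat.sInf_mem hA
  obtain ⟨c, hc⟩ := hmem
  -- choose covers of the big balls
  choose d hd using fun i => hp (c i)
  -- the thickening is covered by the n*p balls
  have key : Metric.cthickening δ A ⊆
      ⋃ ij : Fin n × Fin p, Metric.closedBall (d ij.1 ij.2) ε := by
    intro x hx
    have hx' : EMetric.infEdist x A ≤ ENNReal.ofReal δ := hx
    -- A is nonempty (else cthickening is empty)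
    rcases Set.eq_empty_or_nonempty A with hAe | hAne
    · rw [hAe, Metric.cthickening_empty] at hx
      exact hx.elim
    -- n > 0
    have hn0 : 0 < n := by
      rcases Nat.eq_zero_or_pos n with h0 | h
      · exfalso
        obtain ⟨a, ha⟩ := hAne
        haveI : IsEmpty (Fin n) := by rw [h0]; infer_instance
        simpa using hc ha
      · exact h
    have : Nonempty (Fin n) := ⟨⟨0, hn0⟩⟩
    -- infEdist to the union of balls
    have h1 : Metric.infEDist x (⋃ i, Metric.closedBall (c i) ε) ≤ ENNReal.ofReal δ :=
      le_trans (EMetric.infEdist_anti hc) hx'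
    rw [EMetric.infEdist_iUnion] at h1
    obtain ⟨i, hi⟩ := Finite.exists_min (fun i => EMetric.infEdist x (Metric.closedBall (c i) ε))
    have h2 : EMetric.infEdist x (Metric.closedBall (c i) ε) ≤ ENNReal.ofReal δ :=
      (le_iInf hi).trans h1
    -- hence x is in the closed ball of radius δ+ε around c i
    have h3 : edist x (c i) ≤ ENNReal.ofReal δ + ENNReal.ofReal ε := by
      refine ENNReal.le_of_forall_pos_le_add fun η hη hfin => ?_
      have hlt : EMetric.infEdist x (Metric.closedBall (c i) ε) < ENNReal.ofReal δ + η := by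
        refine lt_of_le_of_lt h2 ?_
        exact ENNReal.lt_add_right ENNReal.ofReal_ne_top (by exact_mod_cast hη.ne')
      obtain ⟨y, hy, hxy⟩ := EMetric.infEdist_lt_iff.mp hlt
      have hyc : edist y (c i) ≤ ENNReal.ofReal ε := by
        rw [edist_le_ofReal hε.le]
        exact hy
      calc edist x (c i) ≤ edist x y + edist y (c i) := edist_triangle _ _ _
        _ ≤ (ENNReal.ofReal δ + η) + ENNReal.ofReal ε := add_le_add hxy.le hyc
        _ = ENNReal.ofReal δ + ENNReal.ofReal ε + η := by ring
    have h4 : x ∈ Metric.closedBall (c i) (δ + ε) := by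
      rw [Metric.mem_closedBall, ← edist_le_ofReal (by positivity)]
      rwa [ENNReal.ofReal_add hδ.le hε.le]
    obtain ⟨j, hj⟩ := Set.mem_iUnion.mp (hd i h4)
    exact Set.mem_iUnion.mpr ⟨(i, j), hj⟩
  -- convert to a covering by n * p balls
  have hcov : CoveredBy (Metric.cthickening δ A) ε (p * n) := by
    refine ⟨fun k => (let ij := (finProdFinEquiv.symm (Fin.cast (Nat.mul_comm p n) k)); d ij.1 ij.2), ?_⟩
    intro x hx
    obtain ⟨ij, hij⟩ := Set.mem_iUnion.mp (key hx)
    refine Set.mem_iUnion.mpr ⟨Fin.cast (Nat.mul_comm n p) (finProdFinEquiv ij), ?_⟩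
    simpa using hij
  exact Nat.sInf_le hcov
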